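/- Let d ≥ 1 and let 𝔪 = ⨁_{a ∈ ℕ^d} 𝔪_a be a ℂ-Lie algebra graded by ℕ^d, i.e. [𝔪_a, 𝔪_b] ⊆ 𝔪_{a+b}, with every homogeneous component 𝔪_a finite-dimensional over ℂ. Let R = ℂ[x] and let M = ⨁_{a ∈ ℤ^d, a ≤ 0} M_a be a ℤ^d-graded R-module supported in degrees a with all coordinates ≤ 0, each M_a free of finite rank over R, equipped with an R-linear Lie module action of 𝔪 satisfying 𝔪_a · M_b ⊆ M_{a+b} (interpreted as 0 when a+b has a positive coordinate). For c ∈ ℂ let M(c) := M/(x−c)M, a ℤ^d-graded 𝔪-module over ℂ. Fix ν ∈ ℤ^d. Suppose there is an infinite set S ⊆ ℂ such that for every c ∈ S ∪ {0}: (a) there is no nonzero w ∈ M(c)_ν with 𝔪·w = 0, and (b) for every ℂ-linear map ψ : 𝔪 → M(c) with ψ(𝔪_a) ⊆ M(c)_{a+ν} for all a and ψ([u₁,u₂]) = u₁·ψ(u₂) − u₂·ψ(u₁) for all u₁, u₂ ∈ 𝔪, there exists w ∈ M(c)_ν with ψ(u) = u·w for all u ∈ 𝔪. Then for A = ℂ[x]_{(x)},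 every A-linear map φ : 𝔪 ⊗_ℂ A → M ⊗_R A with φ(𝔪_a ⊗ A) ⊆ M_{a+ν} ⊗_R A for all a and φ([u₁,u₂]) = u₁·φ(u₂) − u₂·φ(u₁) for all u₁, u₂ ∈ 𝔪 ⊗_ℂ A, is of the form φ(u) = u·v for some v ∈ M_ν ⊗_R A. -/

import Mathlib

open Polynomial

open DirectSum

section Aux
variable {R : Type*} [CommRing R] {M : Type*} [AddCommGroup M] [Module R M]
  {ι : Type*} [DecidableEq ι] (Mg : ι → Submodule R M) (hMg : DirectSum.IsInternal Mg)

/-- The linear equivalence coming from an internal direct sum decomposition. -/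
noncomputable def eqv : (⨁ b, Mg b) ≃ₗ[R] M :=
  LinearEquiv.ofBijective (DirectSum.coeLinearMap Mg) hMg

lemma eqv_of (b : ι) (y : Mg b) : eqv Mg hMg (DirectSum.of _ b y) = y := by
  simp [eqv, LinearEquiv.ofBijective]

lemma symm_of_mem (b : ι) (m : M) (hm : m ∈ Mg b) :
    (eqv Mg hMg).symm m = DirectSum.of _ b ⟨m, hm⟩ := by
  apply (eqv Mg hMg).injective
  simp [eqv, LinearEquiv.ofBijective]

variable (hfree : ∀ b, NoZeroSMulDivisors R (Mg b))

include hMg hfree in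
lemma tf_components (b : ι) (t : R) (ht : t ≠ 0) (m : M) (h : t • m ∈ Mg b) : m ∈ Mg b := by
  classical
  have h1 : (eqv Mg hMg).symm (t • m) = DirectSum.of _ b ⟨t • m, h⟩ := symm_of_mem Mg hMg b _ h
  have h2 : ∀ b' : ι, b' ≠ b → (eqv Mg hMg).symm m b' = 0 := by
    intro b' hb'
    have h3 : t • ((eqv Mg hMg).symm m b') = 0 := by
      have h4 := congrArg (fun x => x b') h1
      simp only [map_smul] at h4
      rw [DFinsupp.smul_apply] at h4
      rw [h4, DirectSum.of_eq_of_ne _ _ _ hb']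
    have := hfree b'
    rcases NoZeroSMulDivisors.eq_zero_or_eq_zero_of_smul_eq_zero h3 with h | h
    · exact absurd h ht
    · exact h
  have h6 : (eqv Mg hMg).symm m = DirectSum.of _ b ((eqv Mg hMg).symm m b) := by
    apply DFinsupp.ext; intro b'
    by_cases hb' : b' = b
    · subst hb'; simp
    · rw [h2 b' hb', DirectSum.of_eq_of_ne _ _ _ hb']
  have h5 : m = ((eqv Mg hMg).symm m b : M) := by
    have h7 := congrArg (eqv Mg hMg) h6
    rw [(eqv Mg hMg).apply_symm_apply, eqv_of] at h7
    exact h7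
  rw [h5]
  exact ((eqv Mg hMg).symm m b).2

include hMg hfree in
lemma tf_M (t : R) (ht : t ≠ 0) (m : M) (h : t • m = 0) : m = 0 := by
  classical
  have h0 : (eqv Mg hMg).symm (t • m) = 0 := by rw [h, map_zero]
  rw [map_smul] at h0
  have hz : (eqv Mg hMg).symm m = 0 := by
    apply DFinsupp.ext; intro b
    have h6 := congrArg (fun x => x b) h0
    simp only [DFinsupp.smul_apply] at h6
    have := hfree b
    rcases NoZeroSMulDivisors.eq_zero_or_eq_zero_of_smul_eq_zero h6 with h | h
    · exact absurd h ht
    · rw [h]; rfl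
  have h7 := congrArg (eqv Mg hMg) hz
  rwa [(eqv Mg hMg).apply_symm_apply, map_zero] at h7

/-- Decomposition of `ψ u` as a finite sum over components, when `ψ` kills all
components outside `F`. -/
lemma sum_proj {N : Type*} [AddCommGroup N] [Module R N] (F : Finset ι)
    (ψ : M →ₗ[R] N) (hvan : ∀ a ∉ F, ∀ u ∈ Mg a, ψ u = 0) (u : M) :
    ψ u = ∑ a ∈ F, ψ ((((eqv Mg hMg).symm u) a : M)) := by
  classical
  set x := (eqv Mg hMg).symm u with hx
  have hu : u = eqv Mg hMg x := ((eqv Mg hMg).apply_symm_apply u).symm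
  have hsum : u = ∑ i ∈ DFinsupp.support x, ((x i : M)) := by
    have h8 : (∑ i ∈ DFinsupp.support x, DirectSum.of (fun i => Mg i) i (x i)) = x :=
      DirectSum.sum_support_of x
    have h9 := congrArg (eqv Mg hMg) h8
    rw [map_sum] at h9
    rw [hu, ← h9]
    exact (Finset.sum_congr rfl fun i _ => eqv_of Mg hMg i (x i))
  have h1 : ψ u = ∑ i ∈ DFinsupp.support x, ψ ((x i : M)) := by
    conv_lhs => rw [hsum]
    rw [map_sum]
  rw [h1]
  have h2 : ∑ i ∈ DFinsupp.support x, ψ ((x i : M))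
      = ∑ i ∈ DFinsupp.support x ∪ F, ψ ((x i : M)) := by
    apply Finset.sum_subset Finset.subset_union_left
    intro i _ hi
    rw [DFinsupp.notMem_support_iff.mp hi]
    simp
  have h3 : ∑ i ∈ F, ψ ((x i : M))
      = ∑ i ∈ DFinsupp.support x ∪ F, ψ ((x i : M)) := by
    apply Finset.sum_subset Finset.subset_union_right
    intro i _ hi
    exact hvan i hi _ (x i).2
  rw [h2, ← h3]

end Aux

section LocAux
variable {R : Type*} [CommRing R] (S : Submonoid R) {M : Type*} [AddCommGroup M] [Module R M]

lemma locSmulCancel (t : S) (z z' : LocalizedModule S M)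
    (h : (t : R) • z = (t : R) • z') : z = z' := by
  induction z using LocalizedModule.induction_on with
  | h m σ =>
    induction z' using LocalizedModule.induction_on with
    | h m' σ' =>
      rw [LocalizedModule.smul'_mk, LocalizedModule.smul'_mk, LocalizedModule.mk_eq] at h
      obtain ⟨c, hc⟩ := h
      rw [LocalizedModule.mk_eq]
      refine ⟨c * t, ?_⟩
      have hc' : (c : R) • (σ' : R) • (t : R) • m = (c : R) • (σ : R) • (t : R) • m' := by
        simpa [Submonoid.smul_def] using hc
      simp only [Submonoid.smul_def, Submonoid.coe_mul]
      calc ((c : R) * t) • (σ' : R) • m = (c : R) • (σ' : R) • (t:R) • m := by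
            rw [mul_smul]; rw [smul_comm (t:R) (σ':R)]
        _ = (c : R) • (σ : R) • (t:R) • m' := hc'
        _ = ((c : R) * t) • (σ : R) • m' := by
            rw [mul_smul]; rw [smul_comm (t:R) (σ:R)]
end LocAux

/-- The ideal `(x) ⊂ ℂ[x]` is prime. -/
instance spanX_isPrime : (Ideal.span {(Polynomial.X : Polynomial ℂ)}).IsPrime :=
  (Ideal.span_singleton_prime Polynomial.X_ne_zero).mpr Polynomial.prime_X

/-- `A = ℂ[x]_{(x)}`, the localization of `ℂ[x]` at the prime ideal `(x)`. -/
noncomputable abbrev LocA : Type :=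
  Localization (Ideal.span {(Polynomial.X : Polynomial ℂ)}).primeCompl

/-- The `ℂ`-module structure on the localized module, by restriction of scalars along
`ℂ → ℂ[x]`. -/
noncomputable instance instModC (M : Type*) [AddCommGroup M] [Module (Polynomial ℂ) M] :
    Module ℂ (LocalizedModule (Ideal.span {(Polynomial.X : Polynomial ℂ)}).primeCompl M) :=
  Module.compHom _ (algebraMap ℂ (Polynomial ℂ))

set_option maxHeartbeats 2000000 in
set_option synthInstance.maxHeartbeats 200000 in
theorem stmt4 (d : ℕ) (hd : 1 ≤ d)
    -- `𝔪` is an `ℕ^d`-graded Lie algebra over `ℂ` with finite-dimensional components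
    (𝔪 : Type*) [LieRing 𝔪] [LieAlgebra ℂ 𝔪]
    (mg : (Fin d → ℕ) → Submodule ℂ 𝔪)
    (hmg : DirectSum.IsInternal mg)
    (hmgfin : ∀ a : Fin d → ℕ, FiniteDimensional ℂ (mg a))
    (hbr : ∀ (a b : Fin d → ℕ) (u v : 𝔪), u ∈ mg a → v ∈ mg b → ⁅u, v⁆ ∈ mg (a + b))
    -- `M` is a `ℤ^d`-graded module over `R = ℂ[x]`, supported in degrees `≤ 0`,
    -- with components free of finite rank over `R`
    (M : Type*) [AddCommGroup M] [Module ℂ M] [Module (Polynomial ℂ) M]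
    [IsScalarTower ℂ (Polynomial ℂ) M]
    (Mg : (Fin d → ℤ) → Submodule (Polynomial ℂ) M)
    (hMg : DirectSum.IsInternal Mg)
    (hMgsupp : ∀ b : Fin d → ℤ, ¬ (∀ i, b i ≤ 0) → Mg b = ⊥)
    (hMgfree : ∀ b : Fin d → ℤ, Module.Free (Polynomial ℂ) (Mg b))
    (hMgfin : ∀ b : Fin d → ℤ, Module.Finite (Polynomial ℂ) (Mg b))
    -- `M` is a Lie module over `𝔪`, the action being `R`-linear and compatible with gradings
    (ρ : 𝔪 →ₗ[ℂ] M →ₗ[Polynomial ℂ] M)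
    (hρ : ∀ u v : 𝔪, ρ ⁅u, v⁆ = ρ u ∘ₗ ρ v - ρ v ∘ₗ ρ u)
    (hgr : ∀ (a : Fin d → ℕ) (b : Fin d → ℤ) (u : 𝔪) (m : M), u ∈ mg a → m ∈ Mg b →
      ρ u m ∈ Mg (fun i => (a i : ℤ) + b i))
    -- fix a degree `ν ∈ ℤ^d` and an infinite set `S ⊆ ℂ`
    (ν : Fin d → ℤ) (S : Set ℂ) (hS : S.Infinite)
    -- (a): for every `c ∈ S ∪ {0}`, `M(c) = M/(x-c)M` has no nonzero invariant of degree `ν`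
    (hinv : ∀ c ∈ S ∪ {0}, ∀ w ∈ Mg ν,
      (∀ u : 𝔪, ∃ m' : M, ρ u w = (Polynomial.X - Polynomial.C c) • m') →
      ∃ m' : M, w = (Polynomial.X - Polynomial.C c) • m')
    -- (b): for every `c ∈ S ∪ {0}`, every graded 1-cocycle `𝔪 → M(c)` of degree `ν`
    -- is a coboundary (stated via `ℂ`-linear lifts `ψ : 𝔪 → M`, which always exist)
    (hcob : ∀ c ∈ S ∪ {0}, ∀ ψ : 𝔪 →ₗ[ℂ] M,
      (∀ (a : Fin d → ℕ) (u : 𝔪), u ∈ mg a →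
        ∃ m₀ ∈ Mg (fun i => (a i : ℤ) + ν i), ∃ m' : M,
          ψ u = m₀ + (Polynomial.X - Polynomial.C c) • m') →
      (∀ u₁ u₂ : 𝔪, ∃ m' : M,
        ψ ⁅u₁, u₂⁆ - ρ u₁ (ψ u₂) + ρ u₂ (ψ u₁) = (Polynomial.X - Polynomial.C c) • m') →
      ∃ w ∈ Mg ν, ∀ u : 𝔪, ∃ m' : M,
        ψ u - ρ u w = (Polynomial.X - Polynomial.C c) • m') :
    -- then every graded 1-cocycle `𝔪 ⊗ A → M ⊗_R A` of degree `ν` is a coboundary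
    -- (an `A`-linear cocycle on `𝔪 ⊗_ℂ A` is determined by its `ℂ`-linear restriction to `𝔪`)
    ∀ φ : 𝔪 →ₗ[ℂ] LocalizedModule (Ideal.span {(Polynomial.X : Polynomial ℂ)}).primeCompl M,
      (∀ (a : Fin d → ℕ) (u : 𝔪), u ∈ mg a →
        ∃ m ∈ Mg (fun i => (a i : ℤ) + ν i),
          ∃ s : (Ideal.span {(Polynomial.X : Polynomial ℂ)}).primeCompl,
            φ u = LocalizedModule.mk m s) →
      (∀ u₁ u₂ : 𝔪, φ ⁅u₁, u₂⁆ =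
        LocalizedModule.map (Ideal.span {(Polynomial.X : Polynomial ℂ)}).primeCompl
            (ρ u₁) (φ u₂)
          - LocalizedModule.map (Ideal.span {(Polynomial.X : Polynomial ℂ)}).primeCompl
            (ρ u₂) (φ u₁)) →
      ∃ v : LocalizedModule (Ideal.span {(Polynomial.X : Polynomial ℂ)}).primeCompl M,
        (∃ m ∈ Mg ν, ∃ s : (Ideal.span {(Polynomial.X : Polynomial ℂ)}).primeCompl,
          v = LocalizedModule.mk m s) ∧
        ∀ u : 𝔪, φ u =
          LocalizedModule.map (Ideal.span {(Polynomial.X : Polynomial ℂ)}).primeCompl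
            (ρ u) v := by
  classical
  intro φ hgraded hcoc
  set Sm : Submonoid (Polynomial ℂ) :=
    (Ideal.span {(Polynomial.X : Polynomial ℂ)}).primeCompl with hSmdef
  -- basic nonvanishing facts
  have hSmne : ∀ t : Sm, (t : Polynomial ℂ) ≠ 0 := by
    intro t ht
    exact t.2 (by rw [ht]; exact Ideal.zero_mem _)
  have hnz : ∀ b, NoZeroSMulDivisors (Polynomial ℂ) (Mg b) := by
    intro b; have := hMgfree b; exact ⟨fun h => smul_eq_zero.mp h⟩
  have tfM' : ∀ t : Polynomial ℂ, t ≠ 0 → ∀ m : M, t • m = 0 → m = 0 :=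
    fun t ht m h => tf_M Mg hMg hnz t ht m h
  have memMg : ∀ (b) (t : Polynomial ℂ), t ≠ 0 → ∀ m : M, t • m ∈ Mg b → m ∈ Mg b :=
    fun b t ht m h => tf_components Mg hMg hnz b t ht m h
  -- the localization map
  set L : M →ₗ[Polynomial ℂ] LocalizedModule Sm M := LocalizedModule.mkLinearMap Sm M with hL
  have hLapp : ∀ m : M, L m = LocalizedModule.mk m 1 := fun m => rfl
  have hLinj : Function.Injective L := by
    intro m m' h
    rw [hLapp, hLapp, LocalizedModule.mk_eq] at h
    obtain ⟨c, hc⟩ := h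
    simp only [one_smul, Submonoid.smul_def] at hc
    have : (c : Polynomial ℂ) • (m - m') = 0 := by rw [smul_sub, hc, sub_self]
    have := tfM' c (hSmne c) _ this
    exact sub_eq_zero.mp this
  -- scalar compatibility
  have hCsmul : ∀ (c : ℂ) (m : M), (Polynomial.C c) • m = c • m := by
    intro c m
    rw [← Polynomial.algebraMap_eq]
    exact algebraMap_smul (Polynomial ℂ) c m
  have hCsmulLoc : ∀ (c : ℂ) (z : LocalizedModule Sm M),
      @HSMul.hSMul ℂ _ _ (@instHSMul _ _ (instModC M).toSMul) c z = (Polynomial.C c) • z := by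
    intro c z
    show (algebraMap ℂ (Polynomial ℂ) c) • z = _
    rw [Polynomial.algebraMap_eq]
  -- the finite set of relevant degrees
  have hFfin : {a : Fin d → ℕ | ∀ i, (a i : ℤ) + ν i ≤ 0}.Finite := by
    apply Set.Finite.subset
      (Set.Finite.pi (fun i : Fin d => Set.finite_Iic ((-ν i).toNat)))
    intro a ha
    rw [Set.mem_pi]
    intro i _
    have h1 : (a i : ℤ) ≤ -ν i := by linarith [ha i]
    have h2 : (a i : ℤ) ≤ ((-ν i).toNat : ℤ) := le_trans h1 (Int.self_le_toNat _)
    exact_mod_cast h2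
  set Fset : Finset (Fin d → ℕ) := hFfin.toFinset with hFsetdef
  have hFmem : ∀ a : Fin d → ℕ, a ∈ Fset ↔ ∀ i, (a i : ℤ) + ν i ≤ 0 := by
    intro a; rw [hFsetdef, Set.Finite.mem_toFinset]; rfl
  -- φ vanishes on components outside Fset
  have hvanφ : ∀ a ∉ Fset, ∀ u ∈ mg a, φ u = 0 := by
    intro a ha u hu
    obtain ⟨m, hm, s, hs⟩ := hgraded a u hu
    rw [hMgsupp _ (by simpa using (hFmem a).not.mp ha)] at hm
    rw [hs, (Submodule.mem_bot _).mp hm, LocalizedModule.zero_mk]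
  -- existence of denominators for homogeneous elements
  have hden : ∀ (a : Fin d → ℕ) (u : 𝔪), u ∈ mg a →
      ∃ t : Sm, (t : Polynomial ℂ) • φ u ∈ LinearMap.range L := by
    intro a u hu
    obtain ⟨m, hm, s, hs⟩ := hgraded a u hu
    refine ⟨s, ?_⟩
    rw [hs, LocalizedModule.smul'_mk]
    refine ⟨m, ?_⟩
    rw [hLapp]
    exact (LocalizedModule.mk_cancel s m).symm
  choose tfun htfun using hden
  -- finite generating sets for the relevant components of 𝔪
  have hGex : ∀ a : Fin d → ℕ, ∃ G : Finset 𝔪, (G : Set 𝔪) ⊆ (mg a : Set 𝔪) ∧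
      Submodule.span ℂ (G : Set 𝔪) = mg a := by
    intro a
    have := hmgfin a
    obtain ⟨G, hG⟩ := (Module.Finite.iff_fg).mp (hmgfin a)
    exact ⟨G, by rw [← hG]; exact Submodule.subset_span, hG⟩
  choose G hGsub hGspan using hGex
  -- the common denominator
  set s : Sm := ∏ a ∈ Fset, ∏ g ∈ (G a).attach, tfun a (g : 𝔪) (hGsub a g.2) with hsdef
  have hdvd : ∀ a ∈ Fset, ∀ g : (G a), tfun a (g : 𝔪) (hGsub a g.2) ∣ s := by
    intro a ha g
    refine dvd_trans
      (Finset.dvd_prod_of_mem (fun g : (G a) => tfun a (g : 𝔪) (hGsub a g.2))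
        (Finset.mem_attach _ g)) ?_
    exact Finset.dvd_prod_of_mem
      (fun a' => ∏ g ∈ (G a').attach, tfun a' (g : 𝔪) (hGsub a' g.2)) ha
  -- every value of φ has denominator s
  have hcommon : ∀ u : 𝔪, (s : Polynomial ℂ) • φ u ∈ LinearMap.range L := by
    set D : Submodule ℂ 𝔪 :=
      { carrier := {u | (s : Polynomial ℂ) • φ u ∈ LinearMap.range L}
        add_mem' := by
          intro u v hu hv
          simp only [Set.mem_setOf_eq, map_add, smul_add] at *
          exact Submodule.add_mem _ hu hv
        zero_mem' := by
          simp only [Set.mem_setOf_eq, map_zero, smul_zero]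
          exact Submodule.zero_mem _
        smul_mem' := by
          intro c u hu
          simp only [Set.mem_setOf_eq, map_smul] at *
          rw [φ.map_smul, hCsmulLoc, smul_comm]
          exact Submodule.smul_mem _ _ hu } with hDdef
    have hDtop : ∀ u : 𝔪, u ∈ D := by
      have htop : ⨆ a, mg a = ⊤ := hmg.submodule_iSup_eq_top
      intro u
      have : u ∈ (⊤ : Submodule ℂ 𝔪) := trivial
      rw [← htop] at this
      refine (iSup_le (fun a => ?_) : (⨆ a, mg a) ≤ D) this
      by_cases ha : a ∈ Fset
      · rw [← hGspan a]
        rw [Submodule.span_le]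
        intro g hg
        obtain ⟨t, ht⟩ := hdvd a ha ⟨g, hg⟩
        show (s : Polynomial ℂ) • φ g ∈ LinearMap.range L
        rw [ht]
        have : ((tfun a g (hGsub a hg) * t : Sm) : Polynomial ℂ)
            = (t : Polynomial ℂ) * (tfun a g (hGsub a hg) : Polynomial ℂ) := by
          rw [Submonoid.coe_mul, mul_comm]
        rw [this, mul_smul]
        exact Submodule.smul_mem _ _ (htfun a g (hGsub a hg))
      · intro u hu
        show (s : Polynomial ℂ) • φ u ∈ LinearMap.range L
        rw [hvanφ a ha u hu, smul_zero]
        exact Submodule.zero_mem _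
    exact fun u => hDtop u
  -- lift φ to a ℂ-linear map ψ₀ : 𝔪 → M with L ∘ ψ₀ = s • φ
  have hex : ∀ u : 𝔪, ∃ m : M, L m = (s : Polynomial ℂ) • φ u :=
    fun u => LinearMap.mem_range.mp (hcommon u)
  choose f hf using hex
  obtain ⟨ψ₀, hψ₀⟩ : ∃ ψ₀ : 𝔪 →ₗ[ℂ] M, ∀ u, L (ψ₀ u) = (s : Polynomial ℂ) • φ u := by
    refine ⟨{ toFun := f
              map_add' := ?_
              map_smul' := ?_ }, hf⟩
    · intro u v
      apply hLinj
      rw [map_add, hf, hf, hf, map_add, smul_add]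
    · intro c u
      apply hLinj
      show L (f (c • u)) = L (c • f u)
      have h1 : L (c • f u) = L ((Polynomial.C c) • f u) := by rw [hCsmul]
      rw [hf, φ.map_smul, h1, map_smul, hf, hCsmulLoc, smul_comm]
  -- φ u = mk (ψ₀ u) s
  have hφmk : ∀ u : 𝔪, φ u = LocalizedModule.mk (ψ₀ u) s := by
    intro u
    apply locSmulCancel Sm s
    rw [← hψ₀ u, LocalizedModule.smul'_mk, hLapp]
    exact (LocalizedModule.mk_cancel s (ψ₀ u)).symm
  -- ψ₀ is graded
  have hψ₀grad : ∀ (a : Fin d → ℕ) (u : 𝔪), u ∈ mg a →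
      ψ₀ u ∈ Mg (fun i => (a i : ℤ) + ν i) := by
    intro a u hu
    obtain ⟨m, hm, t, ht⟩ := hgraded a u hu
    have h1 : LocalizedModule.mk (ψ₀ u) (1 : Sm)
        = LocalizedModule.mk ((s : Polynomial ℂ) • m) t := by
      rw [← hLapp, hψ₀ u, ht, LocalizedModule.smul'_mk]
    rw [LocalizedModule.mk_eq] at h1
    obtain ⟨c, hc⟩ := h1
    simp only [Submonoid.smul_def, one_smul] at hc
    have h2 : ((c : Polynomial ℂ) * (t : Polynomial ℂ)) • ψ₀ u
        = (c : Polynomial ℂ) • (s : Polynomial ℂ) • m := by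
      rw [mul_smul]; exact hc
    have h3 : ((c : Polynomial ℂ) * (t : Polynomial ℂ)) • ψ₀ u ∈ Mg (fun i => (a i : ℤ) + ν i) := by
      rw [h2]
      exact Submodule.smul_mem _ _ (Submodule.smul_mem _ _ hm)
    exact memMg _ _ (mul_ne_zero (hSmne c) (hSmne t)) _ h3
  -- compatibility of L and the localized action
  have hLρ : ∀ (u : 𝔪) (m : M), LocalizedModule.map Sm (ρ u) (L m) = L (ρ u m) := by
    intro u m
    rw [hLapp, hLapp, LocalizedModule.map_mk]
  have hmapsmul : ∀ (g : M →ₗ[Polynomial ℂ] M) (r : Polynomial ℂ)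
      (z : LocalizedModule Sm M),
      LocalizedModule.map Sm g (r • z) = r • LocalizedModule.map Sm g z := by
    intro g r z
    rw [← algebraMap_smul (Localization Sm) r z, map_smul, algebraMap_smul]
  -- ψ₀ is a cocycle
  have hψ₀coc : ∀ u₁ u₂ : 𝔪, ψ₀ ⁅u₁, u₂⁆ = ρ u₁ (ψ₀ u₂) - ρ u₂ (ψ₀ u₁) := by
    intro u₁ u₂
    apply hLinj
    rw [map_sub, ← hLρ, ← hLρ, hψ₀, hψ₀, hψ₀, hcoc u₁ u₂, smul_sub, hmapsmul, hmapsmul]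
  -- the coboundary map T : Mg ν → Hom_ℂ(𝔪, M)
  obtain ⟨T, hT⟩ : ∃ T : (Mg ν) →ₗ[Polynomial ℂ] (𝔪 →ₗ[ℂ] M),
      ∀ (w : Mg ν) (u : 𝔪), T w u = ρ u (w : M) := by
    refine ⟨{ toFun := fun w =>
              { toFun := fun u => ρ u (w : M)
                map_add' := by intro u v; show ρ (u + v) (w : M) = _; rw [map_add]; rfl
                map_smul' := by intro c u; show ρ (c • u) (w : M) = _; rw [map_smul]; rfl }
              map_add' := ?_
              map_smul' := ?_ }, fun w u => rfl⟩
    · intro w w'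
      apply LinearMap.ext; intro u
      show ρ u ((w : M) + (w' : M)) = _
      rw [map_add]; rfl
    · intro r w
      apply LinearMap.ext; intro u
      show ρ u (r • (w : M)) = _
      rw [map_smul]; rfl
  -- the submodule of graded cocycles
  obtain ⟨C, hCmem⟩ : ∃ C : Submodule (Polynomial ℂ) (𝔪 →ₗ[ℂ] M),
      ∀ ψ : 𝔪 →ₗ[ℂ] M, ψ ∈ C ↔
        ((∀ (a : Fin d → ℕ) (u : 𝔪), u ∈ mg a → ψ u ∈ Mg (fun i => (a i : ℤ) + ν i)) ∧
         (∀ u₁ u₂ : 𝔪, ψ ⁅u₁, u₂⁆ = ρ u₁ (ψ u₂) - ρ u₂ (ψ u₁))) := by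
    refine ⟨{ carrier := {ψ | (∀ (a : Fin d → ℕ) (u : 𝔪), u ∈ mg a →
                ψ u ∈ Mg (fun i => (a i : ℤ) + ν i)) ∧
              (∀ u₁ u₂ : 𝔪, ψ ⁅u₁, u₂⁆ = ρ u₁ (ψ u₂) - ρ u₂ (ψ u₁))}
              add_mem' := ?_
              zero_mem' := ?_
              smul_mem' := ?_ }, fun ψ => Iff.rfl⟩
    · rintro ψ χ ⟨hg1, hc1⟩ ⟨hg2, hc2⟩
      constructor
      · intro a u hu
        rw [LinearMap.add_apply]
        exact Submodule.add_mem _ (hg1 a u hu) (hg2 a u hu)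
      · intro u₁ u₂
        simp only [LinearMap.add_apply, hc1 u₁ u₂, hc2 u₁ u₂, map_add]
        abel
    · constructor
      · intro a u hu
        simp only [LinearMap.zero_apply]
        exact Submodule.zero_mem _
      · intro u₁ u₂
        simp
    · rintro r ψ ⟨hg1, hc1⟩
      constructor
      · intro a u hu
        rw [LinearMap.smul_apply]
        exact Submodule.smul_mem _ _ (hg1 a u hu)
      · intro u₁ u₂
        simp only [LinearMap.smul_apply, hc1 u₁ u₂, map_smul, smul_sub]
  have hψ₀C : ψ₀ ∈ C := (hCmem ψ₀).mpr ⟨hψ₀grad, hψ₀coc⟩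
  have hTC : ∀ w : (Mg ν), T w ∈ C := by
    intro w
    rw [hCmem]
    constructor
    · intro a u hu
      rw [hT]
      exact hgr a ν u _ hu w.2
    · intro u₁ u₂
      rw [hT, hT, hT, hρ u₁ u₂]
      rfl
  -- the key step: every graded cocycle is a coboundary modulo X • C
  have hXne : (Polynomial.X : Polynomial ℂ) ≠ 0 := Polynomial.X_ne_zero
  have keystep : ∀ ψ, ψ ∈ C → ∃ (w : (Mg ν)) (χ : 𝔪 →ₗ[ℂ] M),
      χ ∈ C ∧ ψ = T w + (Polynomial.X : Polynomial ℂ) • χ := by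
    intro ψ hψ
    obtain ⟨hψgrad, hψcoc⟩ := (hCmem ψ).mp hψ
    have h0mem : (0 : ℂ) ∈ S ∪ {0} := Set.mem_union_right _ rfl
    obtain ⟨w, hwmem, hw⟩ := hcob 0 h0mem ψ
      (fun a u hu => ⟨ψ u, hψgrad a u hu, 0, by simp⟩)
      (fun u₁ u₂ => ⟨0, by rw [hψcoc u₁ u₂]; ring_nf; simp⟩)
    have hXC0 : (Polynomial.X - Polynomial.C (0:ℂ)) = (Polynomial.X : Polynomial ℂ) := by
      simp
    rw [hXC0] at hw
    -- divide ψ - T w by X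
    choose g hg using hw
    have hχex : ∃ χ : 𝔪 →ₗ[ℂ] M, ∀ u, ψ u - ρ u (w : M) = (Polynomial.X : Polynomial ℂ) • χ u := by
      refine ⟨{ toFun := g
                map_add' := ?_
                map_smul' := ?_ }, hg⟩
      · intro u v
        refine sub_eq_zero.mp (tfM' Polynomial.X hXne _ ?_)
        rw [smul_sub, smul_add, ← hg, ← hg, ← hg]
        simp only [map_add, LinearMap.add_apply]
        abel
      · intro c u
        simp only [RingHom.id_apply]
        refine sub_eq_zero.mp (tfM' Polynomial.X hXne _ ?_)
        have h1 : (Polynomial.X : Polynomial ℂ) • (c • g u)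
            = c • ((Polynomial.X : Polynomial ℂ) • g u) := by
          rw [← hCsmul c (g u), smul_comm, hCsmul]
        rw [smul_sub, h1, ← hg, ← hg]
        simp only [map_smul, LinearMap.smul_apply, smul_sub]
        abel
    obtain ⟨χ, hχ⟩ := hχex
    have hψ'C : (ψ - T ⟨w, hwmem⟩) ∈ C := Submodule.sub_mem _ hψ (hTC ⟨w, hwmem⟩)
    obtain ⟨hχgrad', hχcoc'⟩ := (hCmem _).mp hψ'C
    have hχgrad : ∀ (a : Fin d → ℕ) (u : 𝔪), u ∈ mg a →
        χ u ∈ Mg (fun i => (a i : ℤ) + ν i) := by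
      intro a u hu
      apply memMg _ Polynomial.X hXne
      rw [← hχ u]
      have := hχgrad' a u hu
      rwa [LinearMap.sub_apply, hT] at this
    have hχcoc : ∀ u₁ u₂ : 𝔪, χ ⁅u₁, u₂⁆ = ρ u₁ (χ u₂) - ρ u₂ (χ u₁) := by
      intro u₁ u₂
      refine sub_eq_zero.mp (tfM' Polynomial.X hXne _ ?_)
      rw [smul_sub, ← hχ ⁅u₁, u₂⁆, smul_sub, ← map_smul (ρ u₁), ← map_smul (ρ u₂),
        ← hχ u₂, ← hχ u₁]
      have h2 := hχcoc' u₁ u₂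
      simp only [LinearMap.sub_apply, hT] at h2
      rw [map_sub (ρ u₁), map_sub (ρ u₂)] at h2
      rw [map_sub (ρ u₁), map_sub (ρ u₂)]
      rw [h2]
      abel
    refine ⟨⟨w, hwmem⟩, χ, (hCmem χ).mpr ⟨hχgrad, hχcoc⟩, ?_⟩
    apply LinearMap.ext; intro u
    have := hχ u
    rw [LinearMap.add_apply, LinearMap.smul_apply, hT, ← this]
    abel
  -- the target module of restrictions
  set MW : Submodule (Polynomial ℂ) M :=
    ⨆ a : {x // x ∈ Fset}, Mg (fun i => (((a : Fin d → ℕ)) i : ℤ) + ν i) with hMWdef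
  haveI hMWfin : Module.Finite (Polynomial ℂ) ↥MW := by
    rw [Module.Finite.iff_fg]
    exact Submodule.fg_iSup _ (fun a => (Module.Finite.iff_fg).mp (hMgfin _))
  have hMgleMW : ∀ a : {x // x ∈ Fset},
      Mg (fun i => (((a : Fin d → ℕ)) i : ℤ) + ν i) ≤ MW := by
    intro a
    rw [hMWdef]
    exact le_iSup (fun a : {x // x ∈ Fset} => Mg (fun i => (((a : Fin d → ℕ)) i : ℤ) + ν i)) a
  -- the comparison map Γ from a finite module onto C
  obtain ⟨Γ, hΓ⟩ : ∃ Γ : (∀ a : {x // x ∈ Fset}, (↥(mg (a : Fin d → ℕ)) →ₗ[ℂ] ↥MW))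
        →ₗ[Polynomial ℂ] (𝔪 →ₗ[ℂ] M),
      ∀ e u, Γ e u = ∑ a ∈ Fset.attach,
        ((e a (((eqv mg hmg).symm u) (a : Fin d → ℕ)) : M)) := by
    refine ⟨{ toFun := fun e =>
              { toFun := fun u => ∑ a ∈ Fset.attach,
                  ((e a (((eqv mg hmg).symm u) (a : Fin d → ℕ)) : M))
                map_add' := ?_
                map_smul' := ?_ }
              map_add' := ?_
              map_smul' := ?_ }, fun e u => rfl⟩
    · intro u v
      simp only [map_add, DirectSum.add_apply, Submodule.coe_add]
      rw [← Finset.sum_add_distrib]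
    · intro c u
      simp only [map_smul, RingHom.id_apply]
      rw [Finset.smul_sum]
      refine Finset.sum_congr rfl fun a _ => ?_
      rw [DFinsupp.smul_apply, map_smul]
      rfl
    · intro e e'
      apply LinearMap.ext; intro u
      simp only [LinearMap.coe_mk, AddHom.coe_mk, LinearMap.add_apply, Pi.add_apply,
        Submodule.coe_add]
      rw [← Finset.sum_add_distrib]
    · intro r e
      apply LinearMap.ext; intro u
      simp only [LinearMap.coe_mk, AddHom.coe_mk, LinearMap.smul_apply, Pi.smul_apply,
        SetLike.val_smul, RingHom.id_apply]
      rw [← Finset.smul_sum]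
  -- C is contained in the range of Γ
  have hCrange : C ≤ LinearMap.range Γ := by
    intro ψ hψ
    obtain ⟨hg1, hc1⟩ := (hCmem ψ).mp hψ
    have hsub : ∀ a : {x // x ∈ Fset}, ∀ x : ↥(mg (a : Fin d → ℕ)), ψ x ∈ MW :=
      fun a x => hMgleMW a (hg1 _ _ x.2)
    refine ⟨fun a =>
      { toFun := fun x => (⟨ψ (x : 𝔪), hsub a x⟩ : ↥MW)
        map_add' := by
          intro x y
          apply Subtype.ext
          show ψ ((x : 𝔪) + (y : 𝔪)) = ψ (x : 𝔪) + ψ (y : 𝔪)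
          rw [map_add]
        map_smul' := by
          intro c x
          apply Subtype.ext
          show ψ (c • (x : 𝔪)) = c • ψ (x : 𝔪)
          rw [map_smul] }, ?_⟩
    apply LinearMap.ext; intro u
    rw [hΓ]
    have hvan : ∀ a ∉ Fset, ∀ x ∈ mg a, ψ x = 0 := by
      intro a ha x hx
      have h4 := hg1 a x hx
      rw [hMgsupp _ (by simpa using (hFmem a).not.mp ha)] at h4
      exact (Submodule.mem_bot _).mp h4
    have hdec := sum_proj mg hmg Fset ψ hvan u
    rw [← Finset.sum_attach Fset (fun a => ψ ((((eqv mg hmg).symm u) a : 𝔪)))] at hdec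
    simp only [LinearMap.coe_mk, AddHom.coe_mk]
    exact hdec.symm
  -- C is finitely generated
  have hCfg : C.FG := by
    haveI hfd : ∀ a : {x // x ∈ Fset}, FiniteDimensional ℂ ↥(mg (a : Fin d → ℕ)) :=
      fun a => hmgfin _
    haveI hfinfac : ∀ a : {x // x ∈ Fset},
        Module.Finite (Polynomial ℂ) (↥(mg (a : Fin d → ℕ)) →ₗ[ℂ] ↥MW) := by
      intro a
      exact Module.Finite.equiv ((Module.finBasis ℂ ↥(mg (a : Fin d → ℕ))).constr
        (Polynomial ℂ) (M' := ↥MW))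
    haveI hfinpi : Module.Finite (Polynomial ℂ)
        (∀ a : {x // x ∈ Fset}, (↥(mg (a : Fin d → ℕ)) →ₗ[ℂ] ↥MW)) := by
      exact Module.Finite.pi
    have hNoeth : IsNoetherian (Polynomial ℂ)
        (∀ a : {x // x ∈ Fset}, (↥(mg (a : Fin d → ℕ)) →ₗ[ℂ] ↥MW)) :=
      by
        exact isNoetherian_of_isNoetherianRing_of_finite (Polynomial ℂ)
          (∀ a : {x // x ∈ Fset}, (↥(mg (a : Fin d → ℕ)) →ₗ[ℂ] ↥MW))
    have h1 : Submodule.map Γ (Submodule.comap Γ C) = C := by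
      rw [Submodule.map_comap_eq]
      exact inf_eq_right.mpr hCrange
    rw [← h1]
    exact Submodule.FG.map _ (IsNoetherian.noetherian _)
  -- Nakayama
  set B : Submodule (Polynomial ℂ) (𝔪 →ₗ[ℂ] M) := LinearMap.range T with hBdef
  set N : Submodule (Polynomial ℂ) ((𝔪 →ₗ[ℂ] M) ⧸ B) := Submodule.map B.mkQ C with hNdef
  have hNfg : N.FG := Submodule.FG.map _ hCfg
  have hle : N ≤ (Ideal.span {(Polynomial.X : Polynomial ℂ)}) • N := by
    rintro q ⟨ψ, hψC, rfl⟩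
    obtain ⟨w, χ, hχC, hdec⟩ := keystep ψ hψC
    have h5 : B.mkQ ψ = (Polynomial.X : Polynomial ℂ) • B.mkQ χ := by
      rw [hdec, map_add, map_smul]
      have hTw : B.mkQ (T w) = 0 := by
        rw [Submodule.mkQ_apply, Submodule.Quotient.mk_eq_zero]
        exact ⟨w, rfl⟩
      rw [hTw, zero_add]
    rw [h5]
    exact Submodule.smul_mem_smul (Ideal.mem_span_singleton_self _) ⟨χ, hχC, rfl⟩
  obtain ⟨r, hr1, hr0⟩ :=
    Submodule.exists_sub_one_mem_and_smul_eq_zero_of_fg_of_le_smul _ N hNfg hle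
  have hrS : r ∈ Sm := by
    intro hrP
    have hone : (1 : Polynomial ℂ) ∈ Ideal.span {(Polynomial.X : Polynomial ℂ)} := by
      have := Ideal.sub_mem _ hrP hr1
      simpa using this
    exact (Ideal.IsPrime.ne_top spanX_isPrime) ((Ideal.eq_top_iff_one _).mpr hone)
  have hr0' : r • ψ₀ ∈ B := by
    have hmem : B.mkQ ψ₀ ∈ N := ⟨ψ₀, hψ₀C, rfl⟩
    have h6 := hr0 _ hmem
    rw [← map_smul, Submodule.mkQ_apply, Submodule.Quotient.mk_eq_zero] at h6
    exact h6
  obtain ⟨w, hw⟩ := hr0'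
  -- conclusion
  refine ⟨LocalizedModule.mk (w : M) (⟨r, hrS⟩ * s), ⟨(w : M), w.2, _, rfl⟩, ?_⟩
  intro u
  rw [LocalizedModule.map_mk]
  have h1 : ρ u (w : M) = r • ψ₀ u := by
    have h7 := congrArg (fun F : 𝔪 →ₗ[ℂ] M => F u) hw
    simpa [hT] using h7
  rw [h1]
  have h2 : LocalizedModule.mk (r • ψ₀ u) ((⟨r, hrS⟩ : Sm) * s)
      = LocalizedModule.mk (ψ₀ u) s := by
    have h8 := LocalizedModule.mk_cancel_common_left (⟨r, hrS⟩ : Sm) s (ψ₀ u)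
    simpa [Submonoid.smul_def] using h8
  rw [h2]
  exact hφmk u
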